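/- Fix a lacing diagram w = (w_1,…,w_n). The Demazure product δ(P(P_1,…,P_n)) is the same permutation for every choice of pipe dreams P_1,…,P_n with P̌_j ∈ 𝒫(w_j) for all j = 1,…,n; that is, it is independent of the choice of P_1,…,P_n. -/

import Mathlib

open scoped Classical

noncomputable section

/-! ### Pipe dreams and Demazure products -/

/-- A pipe dream: the set of crossing tiles (0-based positions). -/
abbrev PD := Finset (ℕ × ℕ)

/-- The simple reflection `s_i` (0-based: swaps `i` and `i+1`). -/
def sGen (i : ℕ) : Equiv.Perm ℕ := Equiv.swap i (i + 1)

/-- Coxeter length of a permutation of `ℕ`: the number of inversions. -/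
noncomputable def clen (v : Equiv.Perm ℕ) : ℕ :=
  Set.ncard {pq : ℕ × ℕ | pq.1 < pq.2 ∧ v pq.2 < v pq.1}

/-- One step of the Demazure (0-Hecke) product: multiply by `s_i` unless it drops length. -/
noncomputable def demStep (w : Equiv.Perm ℕ) (i : ℕ) : Equiv.Perm ℕ :=
  if clen w < clen (w * sGen i) then w * sGen i else w

/-- Demazure product of a word in the simple reflections. -/
noncomputable def demWord (word : List ℕ) : Equiv.Perm ℕ := word.foldl demStep 1

/-- A pipe dream fits in the `k × l` grid. -/
def InGrid (k l : ℕ) (P : PD) : Prop := ∀ pq ∈ P, pq.1 < k ∧ pq.2 < l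

/-- The crossing tiles of `P` in reading order: along rows, right to left,
top to bottom. -/
def posList (k l : ℕ) (P : PD) : List (ℕ × ℕ) :=
  (List.range k).flatMap fun i =>
    ((List.range l).reverse).filterMap fun j => if (i, j) ∈ P then some (i, j) else none

/-- The word of a pipe dream: the crossing tile at (0-based) `(i,j)` contributes the
letter `i + j` (antidiagonal index), read along rows right-to-left, top-to-bottom. -/
def pdWord (k l : ℕ) (P : PD) : List ℕ := (posList k l P).map fun pq => pq.1 + pq.2

/-- The Demazure product `δ(P)` of a pipe dream. -/
noncomputable def pdDelta (k l : ℕ) (P : PD) : Equiv.Perm ℕ := demWord (pdWord k l P)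

/-- `P` rotated through 180 degrees inside the `k × l` grid. -/
def rot180 (k l : ℕ) (P : PD) : PD := P.image fun pq => (k - 1 - pq.1, l - 1 - pq.2)

/-- The simplification of `P`: omit the `t`-th letter whenever the Demazure product of
the length-`t` prefix equals that of the length-`t+1` prefix (lexicographically first
subword with full Demazure product). -/
noncomputable def simplification (k l : ℕ) (P : PD) : PD :=
  P.filter fun pos => ∀ t : ℕ, (posList k l P)[t]? = some pos →
    demWord ((pdWord k l P).take (t + 1)) ≠ demWord ((pdWord k l P).take t)

/-! ### Partial permutations -/

/-- A `k × l` partial permutation, as the relation `rel p q` ⟺ "entry 1 at `(p,q)`"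
(0-based): at most one nonzero entry in each row and column. -/
def IsPartialPerm (k l : ℕ) (rel : ℕ → ℕ → Prop) : Prop :=
  (∀ p q, rel p q → p < k ∧ q < l) ∧
  (∀ p q q', rel p q → rel p q' → q = q') ∧
  (∀ p p' q, rel p q → rel p' q → p = p')

/-- `v ∈ S_∞` is a completion of the `k × l` partial permutation `rel`:
a (finitely supported) permutation whose upper-left `k × l` corner is `rel`. -/
def IsCompletion (k l : ℕ) (rel : ℕ → ℕ → Prop) (v : Equiv.Perm ℕ) : Prop :=
  (∃ N, ∀ i, N ≤ i → v i = i) ∧ ∀ p q, p < k → q < l → (rel p q ↔ v p = q)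

/-- `v = w̃` is the minimal-length completion of `rel`. -/
def IsMinCompletion (k l : ℕ) (rel : ℕ → ℕ → Prop) (v : Equiv.Perm ℕ) : Prop :=
  IsCompletion k l rel v ∧ ∀ v', IsCompletion k l rel v' → clen v ≤ clen v'

/-- The minimal-length completion `w̃` of a partial permutation. -/
noncomputable def minComp (k l : ℕ) (rel : ℕ → ℕ → Prop) : Equiv.Perm ℕ :=
  Classical.epsilon (IsMinCompletion k l rel)

/-- `P ∈ 𝒫(w)`: pipe dreams in the `k × l` grid with Demazure product `w̃`. -/
def PipeDreamsFor (k l : ℕ) (rel : ℕ → ℕ → Prop) (P : PD) : Prop :=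
  InGrid k l P ∧ pdDelta k l P = minComp k l rel


/-! ### Block decompositions and Zelevinsky permutations -/

/-- `rowSum r j = r 0 + ⋯ + r (j-1)`. -/
def rowSum (r : ℕ → ℕ) (j : ℕ) : ℕ := ∑ q ∈ Finset.range j, r q

/-- Total size `d = r 0 + ⋯ + r n`. -/
def dTot (n : ℕ) (r : ℕ → ℕ) : ℕ := rowSum r (n + 1)

/-- Global row `p` lies in block row `j` (block rows counted from the top, of heights
`r 0, …, r n`). -/
def InBlockRow (r : ℕ → ℕ) (j p : ℕ) : Prop := rowSum r j ≤ p ∧ p < rowSum r (j + 1)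

/-- Global column `q` lies in block column `i` *from the right* (widths `r 0, …, r n`
from the right). -/
def InBlockCol (n : ℕ) (r : ℕ → ℕ) (i q : ℕ) : Prop :=
  dTot n r - rowSum r (i + 1) ≤ q ∧ q < dTot n r - rowSum r i

/-- `v` is a Zelevinsky permutation for the block decomposition given by
`r 0, …, r n`: it is a `d × d` permutation matrix (fixes everything from `d` on),
the blocks `B_{ji}` with `i ≥ j + 2` vanish, and the nonzero entries proceed from
northwest to southeast within each block row and block column. -/
def IsZelevinsky (n : ℕ) (r : ℕ → ℕ) (v : Equiv.Perm ℕ) : Prop :=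
  (∀ p, dTot n r ≤ p → v p = p) ∧
  (∀ p, p < dTot n r → ∀ j i, j ≤ n → i ≤ n → InBlockRow r j p →
    InBlockCol n r i (v p) → i ≤ j + 1) ∧
  (∀ p p', p < p' → p' < dTot n r →
    ((∃ j ≤ n, InBlockRow r j p ∧ InBlockRow r j p') ∨
     (∃ i ≤ n, InBlockCol n r i (v p) ∧ InBlockCol n r i (v p'))) → v p < v p')

/-- The rank array of a Zelevinsky permutation: `r_{ij}` is the number of nonzero
entries of `v` in the blocks weakly southeast of `B_{ji}`. -/
def rankArray (n : ℕ) (r : ℕ → ℕ) (v : Equiv.Perm ℕ) (i j : ℕ) : ℕ :=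
  ((Finset.range (dTot n r)).filter fun p =>
    rowSum r j ≤ p ∧ dTot n r - rowSum r (i + 1) ≤ v p).card

/-- `v = v(Hom)`: the unique Zelevinsky permutation with entrywise maximal rank array. -/
def IsHomZel (n : ℕ) (r : ℕ → ℕ) (v : Equiv.Perm ℕ) : Prop :=
  IsZelevinsky n r v ∧ ∀ v', IsZelevinsky n r v' →
    ∀ i j, j ≤ i → i ≤ n → rankArray n r v' i j ≤ rankArray n r v i j

/-- `vm = v(m + r)` where `v = v(r)`: the Zelevinsky permutation for the ranks
`m + r 0, …, m + r n` whose rank array is obtained by adding `m` to every entry of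
the rank array of `v`. -/
def IsShiftedZel (n : ℕ) (r : ℕ → ℕ) (v : Equiv.Perm ℕ) (m : ℕ) (vm : Equiv.Perm ℕ) : Prop :=
  IsZelevinsky n (fun j => m + r j) vm ∧
  ∀ i j, j ≤ i → i ≤ n →
    rankArray n (fun j => m + r j) vm i j = m + rankArray n r v i j

/-- The Ferrers shape `D_Hom` of all positions strictly above the block
superantidiagonal (blocks `B_{ji}` with `i ≥ j + 2`). -/
def DHom (n : ℕ) (r : ℕ → ℕ) : PD :=
  (Finset.range (dTot n r) ×ˢ Finset.range (dTot n r)).filter fun pq =>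
    ∃ j ≤ n, ∃ i ≤ n, InBlockRow r j pq.1 ∧ InBlockCol n r i pq.2 ∧ j + 2 ≤ i

/-- `P(P_1, …, P_n)`: the `d × d` pipe dream with every block strictly above the block
superantidiagonal filled with crossing tiles, the superantidiagonal `r (j-1) × r j`
block in block row `j - 1` equal to `P j`, and all other blocks empty. -/
def assemble (n : ℕ) (r : ℕ → ℕ) (P : ℕ → PD) : PD :=
  (Finset.range (dTot n r) ×ˢ Finset.range (dTot n r)).filter fun pq =>
    (∃ j ≤ n, ∃ i ≤ n, InBlockRow r j pq.1 ∧ InBlockCol n r i pq.2 ∧ j + 2 ≤ i) ∨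
    (∃ j, 1 ≤ j ∧ j ≤ n ∧ InBlockRow r (j - 1) pq.1 ∧ InBlockCol n r j pq.2 ∧
      (pq.1 - rowSum r (j - 1), pq.2 - (dTot n r - rowSum r (j + 1))) ∈ P j)

/-! ### Lacing diagrams -/

/-- A lacing diagram for ranks `r 0, …, r n`: a list `w_1, …, w_n` of partial
permutations, `w_j` of size `r (j-1) × r j` (encoded as relations, with `L j` empty
for `j` out of range). -/
def IsLacingDiagram (n : ℕ) (r : ℕ → ℕ) (L : ℕ → ℕ → ℕ → Prop) : Prop :=
  (∀ j, 1 ≤ j → j ≤ n → IsPartialPerm (r (j - 1)) (r j) (L j)) ∧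
  (∀ j, j = 0 ∨ n < j → L j = fun _ _ => False)

/-- A choice of pipe dreams `P_1, …, P_n` with `P̌_j ∈ 𝒫(w_j)` for all `j`. -/
def LacingChoices (n : ℕ) (r : ℕ → ℕ) (L : ℕ → ℕ → ℕ → Prop) (P : ℕ → PD) : Prop :=
  ∀ j, 1 ≤ j → j ≤ n → InGrid (r (j - 1)) (r j) (P j) ∧
    PipeDreamsFor (r (j - 1)) (r j) (L j) (rot180 (r (j - 1)) (r j) (P j))

/-- The Demazure product of the lacing diagram `L` is the rank array of the Zelevinsky
permutation `v`: for some (equivalently every) choice of pipe dreams `P_j` with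
`P̌_j ∈ 𝒫(w_j)`, the Demazure product of `P(P_1, …, P_n)` is `v`. -/
def LacingDem (n : ℕ) (r : ℕ → ℕ) (L : ℕ → ℕ → ℕ → Prop) (v : Equiv.Perm ℕ) : Prop :=
  (∃ P, LacingChoices n r L P) ∧
  ∀ P, LacingChoices n r L P →
    pdDelta (dTot n r) (dTot n r) (assemble n r P) = v

/-- `L(r)`: lacing diagrams whose Demazure product is the rank array of `v = v(r)`. -/
def LacingSet (n : ℕ) (r : ℕ → ℕ) (v : Equiv.Perm ℕ) : Set (ℕ → ℕ → ℕ → Prop) :=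
  {L | IsLacingDiagram n r L ∧ LacingDem n r L v}

/-- `m + w`: let the partial permutation act on `{m, m+1, …}` instead of `{0, 1, …}`. -/
def shiftRel (m : ℕ) (rel : ℕ → ℕ → Prop) : ℕ → ℕ → Prop :=
  fun p q => m ≤ p ∧ m ≤ q ∧ rel (p - m) (q - m)

/-- `m + w` for a lacing diagram, componentwise. -/
def shiftDiag (m : ℕ) (L : ℕ → ℕ → ℕ → Prop) : ℕ → ℕ → ℕ → Prop :=
  fun j => shiftRel m (L j)

/-- `l(w) = Σ_j l(w̃_j)` for a lacing diagram. -/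
noncomputable def lenLacing (n : ℕ) (r : ℕ → ℕ) (L : ℕ → ℕ → ℕ → Prop) : ℕ :=
  ∑ j ∈ Finset.Icc 1 n, clen (minComp (r (j - 1)) (r j) (L j))


/-! ### Double Grothendieck polynomials

We encode a Laurent polynomial in the row alphabet `z` and column alphabet `ż` as an
honest polynomial in the variables `z i = X (Sum.inl i)` and `b j = X (Sum.inr j)`,
where `b j` stands for the reciprocal `1/ż j` (all the `G`'s are polynomials in the
`z i` and the `ż j⁻¹`; in particular `1 - z i / ż j = 1 - z i * b j`). -/

/-- The ambient polynomial ring. -/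
abbrev GR : Type := MvPolynomial (ℕ ⊕ ℕ) ℚ

/-- The row variable `z i` (0-based). -/
noncomputable def Zv (i : ℕ) : GR := MvPolynomial.X (Sum.inl i)

/-- The column variable `b j = 1 / ż j` (0-based). -/
noncomputable def Bv (j : ℕ) : GR := MvPolynomial.X (Sum.inr j)

/-- Exact division in a ring (junk value `0` if `b ∤ a`). -/
noncomputable def exactDiv (a b : GR) : GR := if h : ∃ c, a = b * c then h.choose else 0

/-- The `i`-th Demazure operator
`∂_i f = (z_{i+1} f(z_i, z_{i+1}) - z_i f(z_{i+1}, z_i)) / (z_{i+1} - z_i)`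
(0-based `i`; it acts on the `z` alphabet only). -/
noncomputable def demOp (i : ℕ) (f : GR) : GR :=
  exactDiv
    (Zv (i + 1) * f -
      Zv i * (MvPolynomial.rename (fun s => Equiv.swap (Sum.inl i) (Sum.inl (i + 1)) s) f))
    (Zv (i + 1) - Zv i)

/-- The longest element `w_0` of `S_k` (0-based; fixes everything from `k` on). -/
def w0 (k : ℕ) : Equiv.Perm ℕ :=
  Function.Involutive.toPerm (fun i => if i < k then k - 1 - i else i)
    (by intro i; dsimp only; split_ifs <;> omega)

/-- The top double Grothendieck polynomial
`G_{w_0}(z/ż) = ∏_{i + j ≤ k} (1 - z_i/ż_j)` (1-based indices `i, j ≥ 1`). -/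
noncomputable def GrothTop (k : ℕ) : GR :=
  ∏ pq ∈ (Finset.range k ×ˢ Finset.range k).filter (fun pq => pq.1 + pq.2 + 2 ≤ k),
    (1 - Zv pq.1 * Bv pq.2)

/-- Auxiliary fuelled recursion computing double Grothendieck polynomials via
`G_{v s_i} = ∂_i G_v` whenever `l(v s_i) < l(v)`. -/
noncomputable def GrothAux (k : ℕ) : ℕ → Equiv.Perm ℕ → GR
  | 0, v => if v = w0 k then GrothTop k else 0
  | fuel + 1, v =>
    if v = w0 k then GrothTop k
    else if h : ∃ i, i + 2 ≤ k ∧ v i < v (i + 1) then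
      demOp (Nat.find h) (GrothAux k fuel (v * sGen (Nat.find h)))
    else 0

/-- The double Grothendieck polynomial `G_v(z/ż)` of `v ∈ S_k`. -/
noncomputable def Groth (k : ℕ) (v : Equiv.Perm ℕ) : GR := GrothAux k (k * k) v

/-- The least `N` such that `v` fixes everything from `N` on. -/
noncomputable def permBound (v : Equiv.Perm ℕ) : ℕ := sInf {N | ∀ i, N ≤ i → v i = i}

/-- The double Grothendieck polynomial of a finitely supported permutation
(independent of the choice of `k`). -/
noncomputable def GrothPerm (v : Equiv.Perm ℕ) : GR := Groth (permBound v) v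


/-! ### Quiver alphabets

For ranks `r 0, …, r n` with `d = r 0 + ⋯ + r n`, the row alphabet
`x = x^0, …, x^n` is the concatenation of alphabets of sizes `r 0, …, r n`: the global
row variable `z p` (for `p` in block row `j` at offset `a`) *is* the letter `x^j_{a+1}`.
Likewise the column alphabet `ȳ = y^n, …, y^0` is the concatenation of alphabets of
sizes `r n, …, r 0`: the global column variable `ż q` for `q` in block column `i`
(from the right) at offset `a` (from the left of the block) is the letter `y^i_{a+1}`.
Thus `G_{v(r)}(x/ȳ)` is just `Groth d (v(r))`. -/

/-- The block row containing global row `p`. -/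
noncomputable def blockRowOf (r : ℕ → ℕ) (p : ℕ) : ℕ :=
  if h : ∃ j, p < rowSum r (j + 1) then Nat.find h else 0

/-- The block column (from the right) containing global column `q`. -/
noncomputable def blockColOf (n : ℕ) (r : ℕ → ℕ) (q : ℕ) : ℕ :=
  if h : ∃ i, dTot n r ≤ q + rowSum r (i + 1) then Nat.find h else 0

/-- The row variable at global row `p` after reversing each alphabet `x^j` in place. -/
noncomputable def revRow (r : ℕ → ℕ) (p : ℕ) : ℕ :=
  rowSum r (blockRowOf r p) + (r (blockRowOf r p) - 1 - (p - rowSum r (blockRowOf r p)))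

/-- The column variable at global column `q` after reversing each alphabet `y^i` in
place. -/
noncomputable def revCol (n : ℕ) (r : ℕ → ℕ) (q : ℕ) : ℕ :=
  (dTot n r - rowSum r (blockColOf n r q + 1)) +
    (r (blockColOf n r q) - 1 - (q - (dTot n r - rowSum r (blockColOf n r q + 1))))

/-- The exponential reverse monomial `(1 - x̃/ỹ)^P = ∏_{+ ∈ P} (1 - x̃_+/ỹ_+)`. -/
noncomputable def ERM (n : ℕ) (r : ℕ → ℕ) (P : PD) : GR :=
  ∏ pq ∈ P, (1 - Zv (revRow r pq.1) * Bv (revCol n r pq.2))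

/-- Set the last `ℓ` variables of every finite alphabet `x^j` and `y^i` equal to `1`. -/
noncomputable def setLastOnes (n : ℕ) (r : ℕ → ℕ) (ℓ : ℕ) : GR →ₐ[ℚ] GR :=
  MvPolynomial.aeval fun s =>
    match s with
    | Sum.inl p =>
      if ∃ j ≤ n, InBlockRow r j p ∧ rowSum r (j + 1) ≤ p + ℓ then 1 else Zv p
    | Sum.inr q =>
      if ∃ i ≤ n, InBlockCol n r i q ∧ dTot n r - rowSum r i ≤ q + ℓ then 1 else Bv q

/-- For rank lists `big` and `small` (with `small j ≤ big j`): keep the first `small j`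
letters of each alphabet of sizes `big 0, …, big n` (relabelling them as the alphabets
of sizes `small 0, …, small n`) and set all remaining letters equal to `1`. -/
noncomputable def restrictAlph (n : ℕ) (big small : ℕ → ℕ) : GR →ₐ[ℚ] GR :=
  MvPolynomial.aeval fun s =>
    match s with
    | Sum.inl p =>
      if p < dTot n big then
        if p - rowSum big (blockRowOf big p) < small (blockRowOf big p) then
          Zv (rowSum small (blockRowOf big p) + (p - rowSum big (blockRowOf big p)))
        else 1
      else Zv p
    | Sum.inr q =>
      if q < dTot n big then
        if q - (dTot n big - rowSum big (blockColOf n big q + 1)) < small (blockColOf n big q)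
        then
          Bv ((dTot n small - rowSum small (blockColOf n big q + 1)) +
            (q - (dTot n big - rowSum big (blockColOf n big q + 1))))
        else 1
      else Bv q

/-- Keep the first `k` letters of the (generic) row alphabet and the first `l` letters
of the column alphabet, setting all further letters equal to `1`. -/
noncomputable def truncAlph (k l : ℕ) : GR →ₐ[ℚ] GR :=
  MvPolynomial.aeval fun s =>
    match s with
    | Sum.inl p => if p < k then Zv p else 1
    | Sum.inr q => if q < l then Bv q else 1

/-- Substitute the generic alphabets `z, ż` by the alphabets `x^{j-1}, y^j`:
`G(z/ż) ↦ G(x^{j-1}/y^j)`. -/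
noncomputable def placeBlock (n : ℕ) (r : ℕ → ℕ) (j : ℕ) : GR →ₐ[ℚ] GR :=
  MvPolynomial.rename
    (Sum.map (fun a => rowSum r (j - 1) + a) (fun a => (dTot n r - rowSum r (j + 1)) + a))

/-- `m + v`: let the permutation act on `{m, m+1, …}` instead of `{0, 1, …}`. -/
noncomputable def shiftPerm (m : ℕ) (v : Equiv.Perm ℕ) : Equiv.Perm ℕ :=
  v.viaEmbedding ⟨fun a => m + a, add_right_injective m⟩

/-! ### Stable double Grothendieck polynomials -/

/-- The stable double Grothendieck polynomial of a `k × l` partial permutation,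
evaluated in alphabets of sizes `k'` and `l'`:
`lim_{m → ∞} G_{m+w}(z_{k'}/ż_{l'})`, the (eventually constant) limit of the double
Grothendieck polynomials of `m + w` with all variables beyond the first `k'` (resp.
`l'`) set equal to `1`. -/
noncomputable def stableTruncPP (k l k' l' : ℕ) (rel : ℕ → ℕ → Prop) : GR :=
  Classical.epsilon fun g => ∃ M, ∀ m, M ≤ m →
    truncAlph k' l' (GrothPerm (minComp (m + k) (m + l) (shiftRel m rel))) = g

/-- `Ĝ_w(z_k/ż_l)` for a `k × l` partial permutation `w`. -/
noncomputable def stableGrothPP (k l : ℕ) (rel : ℕ → ℕ → Prop) : GR :=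
  stableTruncPP k l k l rel

/-- `Ĝ_μ(z_{k'}/ż_{l'})` for a (finitely supported) permutation `μ`. -/
noncomputable def stableTruncPerm (k' l' : ℕ) (μ : Equiv.Perm ℕ) : GR :=
  Classical.epsilon fun g => ∃ M, ∀ m, M ≤ m →
    truncAlph k' l' (GrothPerm (shiftPerm m μ)) = g

/-- `Ĝ_w(x/ȳ) = Ĝ_{w_1}(x^0/y^1) ⋯ Ĝ_{w_n}(x^{n-1}/y^n)` for a lacing diagram. -/
noncomputable def GhatLacing (n : ℕ) (r : ℕ → ℕ) (L : ℕ → ℕ → ℕ → Prop) : GR :=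
  ∏ j ∈ Finset.Icc 1 n, placeBlock n r j (stableGrothPP (r (j - 1)) (r j) (L j))

/-- A (finitely supported) permutation is grassmannian if it has at most one descent. -/
def IsGrassmannian (μ : Equiv.Perm ℕ) : Prop :=
  (∃ N, ∀ i, N ≤ i → μ i = i) ∧ ∀ i i', μ (i + 1) < μ i → μ (i' + 1) < μ i' → i = i'

/-- Grassmannian lacing diagrams: those whose minimal completions are all grassmannian. -/
def GrassLacingSet (n : ℕ) (r : ℕ → ℕ) : Set (ℕ → ℕ → ℕ → Prop) :=
  {M | IsLacingDiagram n r M ∧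
    ∀ j, 1 ≤ j → j ≤ n → IsGrassmannian (minComp (r (j - 1)) (r j) (M j))}

/-! ### Pipes, top pipe dreams and absorbable elbows -/

/-- One step of a pipe through the tiling determined by `P` in a grid with `l` columns.
A state is `(i, j, fromW)`: the pipe is at tile `(i, j)`, having entered from the west
(`fromW = true`) or from the south (`fromW = false`).  At a crossing the pipe goes
straight; at an elbow it turns (west ↝ north, south ↝ east).  Pipes move only north
and east; `none` means the pipe exits the grid. -/
def nextState (l : ℕ) (P : PD) : ℕ × ℕ × Bool → Option (ℕ × ℕ × Bool) := fun s =>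
  let i := s.1
  let j := s.2.1
  let fromW := s.2.2
  if ((i, j) ∈ P ∧ fromW = true) ∨ ((i, j) ∉ P ∧ fromW = false) then
    -- exit east
    if j + 1 < l then some (i, j + 1, true) else none
  else
    -- exit north
    if 0 < i then some (i - 1, j, false) else none

/-- The (fuelled) forward trajectory of a pipe from a given state. -/
noncomputable def traj (l : ℕ) (P : PD) : ℕ → ℕ × ℕ × Bool → List (ℕ × ℕ × Bool)
  | 0, s => [s]
  | fuel + 1, s =>
    s :: (match nextState l P s with
      | none => []
      | some s' => traj l P fuel s')

/-- The pipe of `P` moving forward from state `s` passes through the tile `c`. -/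
def passesThrough (k l : ℕ) (P : PD) (s : ℕ × ℕ × Bool) (c : ℕ × ℕ) : Prop :=
  ∃ st ∈ traj l P (k + l + 2) s, (st.1, st.2.1) = c

/-- An elbow tile `e` of the pipe dream `D` (in the `k × l` grid) is absorbable if the
two pipes passing through it cross in a crossing tile (necessarily to its northeast). -/
def Absorbable (k l : ℕ) (D : PD) (e : ℕ × ℕ) : Prop :=
  e.1 < k ∧ e.2 < l ∧ e ∉ D ∧
  ∃ c ∈ D, passesThrough k l D (e.1, e.2, true) c ∧ passesThrough k l D (e.1, e.2, false) c

/-- `D` is the top pipe dream of the `k × l` partial permutation `rel`: the unique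
reduced pipe dream for `rel` having no elbow tile due north of a crossing tile. -/
def IsTopPipeDream (k l : ℕ) (rel : ℕ → ℕ → Prop) (D : PD) : Prop :=
  PipeDreamsFor k l rel D ∧ D.card = clen (minComp k l rel) ∧
  ∀ i i' j, i < i' → (i', j) ∈ D → (i, j) ∈ D

/-- `α|P`: add `α` columns of crossing tiles on the left side of the `k × l`
pipe dream `P`. -/
def addCols (k α : ℕ) (P : PD) : PD :=
  (Finset.range k ×ˢ Finset.range α) ∪ P.image fun pq => (pq.1, pq.2 + α)




/-! ### Auxiliary development for the proof -/

/-! Hecke core -/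

def FSupp (w : Equiv.Perm ℕ) : Prop := ∃ N, ∀ x, N ≤ x → w x = x

lemma sGen_apply (i x : ℕ) : sGen i x = if x = i then i + 1 else if x = i + 1 then i else x := by
  simp [sGen, Equiv.swap_apply_def]

lemma FSupp.one : FSupp 1 := ⟨0, fun x _ => rfl⟩

lemma FSupp.sgen (i : ℕ) : FSupp (sGen i) :=
  ⟨i + 2, fun x hx => by rw [sGen_apply]; split_ifs <;> omega⟩

lemma FSupp.mul {w v : Equiv.Perm ℕ} (hw : FSupp w) (hv : FSupp v) : FSupp (w * v) := by
  obtain ⟨N, hN⟩ := hw; obtain ⟨M, hM⟩ := hv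
  exact ⟨max N M, fun x hx => by
    rw [Equiv.Perm.mul_apply, hM x (le_trans (le_max_right _ _) hx),
      hN x (le_trans (le_max_left _ _) hx)]⟩

lemma apply_lt_of_bound {w : Equiv.Perm ℕ} {N : ℕ} (h : ∀ x, N ≤ x → w x = x) {x : ℕ}
    (hx : x < N) : w x < N := by
  by_contra h'
  push_neg at h'
  have h2 : w (w x) = w x := h _ h'
  have := w.injective h2
  omega

lemma FSupp.inv {w : Equiv.Perm ℕ} (hw : FSupp w) : FSupp w⁻¹ := by
  obtain ⟨N, hN⟩ := hw
  refine ⟨N, fun x hx => ?_⟩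
  have : w (w⁻¹ x) = w x := by rw [show w (w⁻¹ x) = x from w.apply_symm_apply x, hN x hx]
  exact w.injective this

lemma invs_finite {w : Equiv.Perm ℕ} (hw : FSupp w) :
    {pq : ℕ × ℕ | pq.1 < pq.2 ∧ w pq.2 < w pq.1}.Finite := by
  obtain ⟨N, hN⟩ := hw
  apply Set.Finite.subset ((Finset.range N ×ˢ Finset.range N).finite_toSet)
  rintro ⟨p, q⟩ ⟨h1, h2⟩
  simp only [Finset.coe_product, Set.mem_prod, Finset.mem_coe, Finset.mem_range]
  dsimp at h1 h2
  have hq : q < N := by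
    by_contra hq'
    push_neg at hq'
    have hwq : w q = q := hN q hq'
    by_cases hp : p < N
    · have := apply_lt_of_bound hN hp
      omega
    · push_neg at hp
      have := hN p hp
      omega
  have hp : p < N := lt_trans h1 hq
  exact ⟨hp, hq⟩

lemma sGen_lt_sGen {p q j : ℕ} (h : p < q) (hne : ¬(p = j ∧ q = j + 1)) :
    sGen j p < sGen j q := by
  rw [sGen_apply, sGen_apply]
  split_ifs <;> omega

lemma clen_mul_sGen_of_lt {w : Equiv.Perm ℕ} (hw : FSupp w) {j : ℕ} (h : w j < w (j + 1)) :
    clen (w * sGen j) = clen w + 1 := by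
  classical
  set I : Set (ℕ × ℕ) := {pq : ℕ × ℕ | pq.1 < pq.2 ∧ w pq.2 < w pq.1} with hI
  set I' : Set (ℕ × ℕ) :=
    {pq : ℕ × ℕ | pq.1 < pq.2 ∧ (w * sGen j) pq.2 < (w * sGen j) pq.1} with hI'
  have hfin : I.Finite := invs_finite hw
  have hss : ∀ x, sGen j (sGen j x) = x := by
    intro x; rw [sGen_apply, sGen_apply]; split_ifs <;> omega
  have hnotmem : (j, j + 1) ∉ I := by
    intro hmem
    exact absurd h (not_lt.mpr (le_of_lt hmem.2))
  have hset : I' = (fun pq : ℕ × ℕ => (sGen j pq.1, sGen j pq.2)) '' I ∪ {(j, j + 1)} := by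
    ext ⟨p, q⟩
    constructor
    · rintro ⟨h1, h2⟩
      by_cases hc : p = j ∧ q = j + 1
      · right; simp [hc.1, hc.2]
      · left
        refine ⟨(sGen j p, sGen j q), ⟨?_, ?_⟩, ?_⟩
        · exact sGen_lt_sGen h1 hc
        · simpa [Equiv.Perm.mul_apply] using h2
        · simp [hss]
    · rintro (⟨⟨p', q'⟩, ⟨h1, h2⟩, hpq⟩ | hpq)
      · obtain ⟨hp, hq⟩ := Prod.mk.injEq .. ▸ hpq
        subst hp; subst hq
        dsimp at h1 h2 ⊢
        constructor
        · apply sGen_lt_sGen h1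
          rintro ⟨hp1, hq1⟩
          rw [hp1, hq1] at h2
          omega
        · simpa [Equiv.Perm.mul_apply, hss] using h2
      · have hpq' : p = j ∧ q = j + 1 := by
          simpa [Prod.ext_iff] using hpq
        have e1 : sGen j j = j + 1 := by rw [sGen_apply]; simp
        have e2 : sGen j (j + 1) = j := by rw [sGen_apply]; split_ifs <;> omega
        refine ⟨by omega, ?_⟩
        rw [hpq'.1, hpq'.2]
        simp [Equiv.Perm.mul_apply, e1, e2, h]
  have hinj : Function.Injective (fun pq : ℕ × ℕ => (sGen j pq.1, sGen j pq.2)) := by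
    rintro ⟨a, b⟩ ⟨c, d⟩ hcd
    obtain ⟨h1, h2⟩ := Prod.mk.injEq .. ▸ hcd
    exact Prod.ext ((sGen j).injective h1) ((sGen j).injective h2)
  have hdisj : Disjoint ((fun pq : ℕ × ℕ => (sGen j pq.1, sGen j pq.2)) '' I)
      ({(j, j + 1)} : Set (ℕ × ℕ)) := by
    rw [Set.disjoint_singleton_right]
    rintro ⟨⟨p, q⟩, ⟨h1, _⟩, hpq⟩
    obtain ⟨hp, hq⟩ := Prod.mk.injEq .. ▸ hpq
    have ep : p = j + 1 := by
      by_contra hc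
      rw [sGen_apply] at hp
      split_ifs at hp <;> omega
    have eq' : q = j := by
      by_contra hc
      rw [sGen_apply] at hq
      split_ifs at hq <;> omega
    omega
  have : clen (w * sGen j) = I'.ncard := rfl
  rw [this, hset, Set.ncard_union_eq hdisj (hfin.image _) (Set.finite_singleton _),
    Set.ncard_image_of_injective _ hinj, Set.ncard_singleton]
  rfl

lemma demStep_eq {w : Equiv.Perm ℕ} (hw : FSupp w) (j : ℕ) :
    demStep w j = if w j < w (j + 1) then w * sGen j else w := by
  rcases lt_trichotomy (w j) (w (j + 1)) with hlt | heq | hgt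
  · rw [if_pos hlt]
    unfold demStep
    rw [if_pos]
    rw [clen_mul_sGen_of_lt hw hlt]
    omega
  · exact absurd (w.injective heq) (by omega)
  · rw [if_neg (by omega)]
    unfold demStep
    rw [if_neg]
    have hw' : FSupp (w * sGen j) := hw.mul (FSupp.sgen j)
    have e1 : (w * sGen j) j = w (j + 1) := by
      rw [Equiv.Perm.mul_apply, sGen_apply]; simp
    have e2 : (w * sGen j) (j + 1) = w j := by
      rw [Equiv.Perm.mul_apply, sGen_apply]
      split_ifs <;> omega
    have hlt' : (w * sGen j) j < (w * sGen j) (j + 1) := by omega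
    have := clen_mul_sGen_of_lt hw' hlt'
    have e3 : w * sGen j * sGen j = w := by
      rw [mul_assoc, sGen, Equiv.swap_mul_self, mul_one]
    rw [e3] at this
    omega

lemma FSupp.dstep {w : Equiv.Perm ℕ} (hw : FSupp w) (j : ℕ) : FSupp (demStep w j) := by
  unfold _root_.demStep
  split_ifs
  · exact hw.mul (FSupp.sgen j)
  · exact hw

lemma FSupp.foldl {u : Equiv.Perm ℕ} (hu : FSupp u) (W : List ℕ) :
    FSupp (List.foldl demStep u W) := by
  induction W generalizing u with
  | nil => exact hu
  | cons a t ih => exact ih (hu.dstep a)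

lemma demWord_fs (W : List ℕ) : FSupp (demWord W) := FSupp.one.foldl W


/-! Hecke chunk 2 -/

lemma sGen_inv (i : ℕ) : (sGen i)⁻¹ = sGen i := Equiv.swap_inv _ _

lemma sGen_comm {i j : ℕ} (h : i + 2 ≤ j ∨ j + 2 ≤ i) : sGen i * sGen j = sGen j * sGen i := by
  ext x
  simp only [Equiv.Perm.mul_apply, sGen_apply]
  split_ifs <;> omega

lemma mul_sGen_apply_of_ne {u : Equiv.Perm ℕ} {i x : ℕ} (h1 : x ≠ i) (h2 : x ≠ i + 1) :
    (u * sGen i) x = u x := by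
  rw [Equiv.Perm.mul_apply, sGen_apply, if_neg h1, if_neg h2]

lemma demStep_comm {u : Equiv.Perm ℕ} (hu : FSupp u) {i j : ℕ} (h : i + 2 ≤ j ∨ j + 2 ≤ i) :
    demStep (demStep u i) j = demStep (demStep u j) i := by
  have hui : FSupp (u * sGen i) := hu.mul (FSupp.sgen i)
  have huj : FSupp (u * sGen j) := hu.mul (FSupp.sgen j)
  have e1 : (u * sGen i) j = u j := mul_sGen_apply_of_ne (by omega) (by omega)
  have e2 : (u * sGen i) (j + 1) = u (j + 1) := mul_sGen_apply_of_ne (by omega) (by omega)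
  have e3 : (u * sGen j) i = u i := mul_sGen_apply_of_ne (by omega) (by omega)
  have e4 : (u * sGen j) (i + 1) = u (i + 1) := mul_sGen_apply_of_ne (by omega) (by omega)
  rw [demStep_eq hu i, demStep_eq hu j]
  by_cases hi : u i < u (i + 1) <;> by_cases hj : u j < u (j + 1)
  · rw [if_pos hi, if_pos hj, demStep_eq hui j, demStep_eq huj i, e1, e2, e3, e4,
      if_pos hj, if_pos hi, mul_assoc, mul_assoc, sGen_comm h]
  · rw [if_pos hi, if_neg hj, demStep_eq hui j, demStep_eq hu i, e1, e2, if_neg hj, if_pos hi]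
  · rw [if_neg hi, if_pos hj, demStep_eq huj i, demStep_eq hu j, e3, e4, if_neg hi, if_pos hj]
  · rw [if_neg hi, if_neg hj, demStep_eq hu j, demStep_eq hu i, if_neg hj, if_neg hi]

noncomputable def lStep (i : ℕ) (w : Equiv.Perm ℕ) : Equiv.Perm ℕ :=
  if w⁻¹ i < w⁻¹ (i + 1) then sGen i * w else w

lemma FSupp.lstep {w : Equiv.Perm ℕ} (hw : FSupp w) (i : ℕ) : FSupp (lStep i w) := by
  unfold lStep; split_ifs; exacts [(FSupp.sgen i).mul hw, hw]

lemma sGen_mul_eq {u : Equiv.Perm ℕ} {i j : ℕ} (h1 : u j = i) (h2 : u (j + 1) = i + 1) :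
    sGen i * u = u * sGen j := by
  ext x
  simp only [Equiv.Perm.mul_apply]
  by_cases hx1 : x = j
  · subst hx1
    rw [h1, sGen_apply, if_pos rfl, sGen_apply, if_pos rfl, h2]
  · by_cases hx2 : x = j + 1
    · subst hx2
      rw [h2, sGen_apply, sGen_apply]
      split_ifs <;> omega
    · have hne1 : u x ≠ i := fun hc => hx1 (u.injective (hc.trans h1.symm))
      have hne2 : u x ≠ i + 1 := fun hc => hx2 (u.injective (hc.trans h2.symm))
      rw [sGen_apply, if_neg hne1, if_neg hne2, sGen_apply, if_neg hx1, if_neg hx2]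

lemma sGen_lt_iff {a x y : ℕ} (h : x ≠ y) :
    sGen a x < sGen a y ↔ ((x < y ∧ ¬(x = a ∧ y = a + 1)) ∨ (y = a ∧ x = a + 1)) := by
  rw [sGen_apply, sGen_apply]
  split_ifs <;> omega

lemma demStep_lStep {u : Equiv.Perm ℕ} (hu : FSupp u) (i j : ℕ) :
    demStep (lStep i u) j = lStep i (demStep u j) := by
  have hP : u (u⁻¹ i) = i := u.apply_symm_apply i
  have hQ : u (u⁻¹ (i + 1)) = i + 1 := u.apply_symm_apply (i + 1)
  have hab : u j ≠ u (j + 1) := fun h => by have := u.injective h; omega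
  have hPQ : u⁻¹ i ≠ u⁻¹ (i + 1) := fun h => by rw [h, hQ] at hP; omega
  have t1 : u j = i ↔ j = u⁻¹ i := ⟨fun h => u.injective (by rw [h, hP]), fun h => by rw [h, hP]⟩
  have t2 : u j = i + 1 ↔ j = u⁻¹ (i + 1) :=
    ⟨fun h => u.injective (by rw [h, hQ]), fun h => by rw [h, hQ]⟩
  have t3 : u (j + 1) = i ↔ j + 1 = u⁻¹ i :=
    ⟨fun h => u.injective (by rw [h, hP]), fun h => by rw [h, hP]⟩
  have t4 : u (j + 1) = i + 1 ↔ j + 1 = u⁻¹ (i + 1) :=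
    ⟨fun h => u.injective (by rw [h, hQ]), fun h => by rw [h, hQ]⟩
  have hinv1 : (u * sGen j)⁻¹ i = sGen j (u⁻¹ i) := by
    rw [mul_inv_rev, Equiv.Perm.mul_apply, sGen_inv]
  have hinv2 : (u * sGen j)⁻¹ (i + 1) = sGen j (u⁻¹ (i + 1)) := by
    rw [mul_inv_rev, Equiv.Perm.mul_apply, sGen_inv]
  have hun : ∀ v : Equiv.Perm ℕ, lStep i v = if v⁻¹ i < v⁻¹ (i + 1) then sGen i * v else v :=
    fun v => rfl
  rw [demStep_eq hu j]
  by_cases hd : u⁻¹ i < u⁻¹ (i + 1)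
  · have hL : lStep i u = sGen i * u := by rw [hun u, if_pos hd]
    rw [hL, demStep_eq ((FSupp.sgen i).mul hu) j]
    have hc2e : (sGen i * u) j = sGen i (u j) := rfl
    have hc2e' : (sGen i * u) (j + 1) = sGen i (u (j + 1)) := rfl
    rw [hc2e, hc2e']
    by_cases hc : u j < u (j + 1)
    · rw [if_pos hc, hun (u * sGen j), hinv1, hinv2]
      by_cases hd2 : sGen j (u⁻¹ i) < sGen j (u⁻¹ (i + 1))
      · have hc2 : sGen i (u j) < sGen i (u (j + 1)) := by
          rw [sGen_lt_iff hab]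
          rw [sGen_lt_iff hPQ] at hd2
          omega
        rw [if_pos hd2, if_pos hc2, mul_assoc]
      · have hd2' := hd2
        rw [sGen_lt_iff hPQ] at hd2'
        have f1 : u j = i := by rw [t1]; omega
        have f2 : u (j + 1) = i + 1 := by rw [t4]; omega
        have hc2 : ¬ (sGen i (u j) < sGen i (u (j + 1))) := by
          rw [sGen_lt_iff hab]; omega
        rw [if_neg hd2, if_neg hc2]
        exact sGen_mul_eq f1 f2
    · have hc2 : ¬ (sGen i (u j) < sGen i (u (j + 1))) := by
        rw [sGen_lt_iff hab]
        omega
      rw [if_neg hc, if_neg hc2, hun u, if_pos hd]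
  · have hL : lStep i u = u := by rw [hun u, if_neg hd]
    rw [hL, demStep_eq hu j]
    by_cases hc : u j < u (j + 1)
    · have hy : ¬ (sGen j (u⁻¹ i) < sGen j (u⁻¹ (i + 1))) := by
        rw [sGen_lt_iff hPQ]
        omega
      rw [if_pos hc, hun (u * sGen j), hinv1, hinv2, if_neg hy]
    · rw [if_neg hc, hun u, if_neg hd]

lemma foldl_lstep (i : ℕ) (W : List ℕ) :
    ∀ u : Equiv.Perm ℕ, FSupp u →
      List.foldl demStep (lStep i u) W = lStep i (List.foldl demStep u W) := by
  induction W with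
  | nil => intro u _; rfl
  | cons a t ih =>
    intro u hu
    simp only [List.foldl_cons]
    rw [demStep_lStep hu i a, ih _ (hu.dstep a)]

lemma demWord_nil : demWord [] = 1 := rfl

lemma demStep_one (i : ℕ) : demStep 1 i = sGen i := by
  rw [demStep_eq FSupp.one i,
    if_pos (by rw [Equiv.Perm.one_apply, Equiv.Perm.one_apply]; omega), one_mul]

lemma lStep_one (i : ℕ) : lStep i 1 = sGen i := by
  rw [lStep, inv_one, if_pos (by rw [Equiv.Perm.one_apply, Equiv.Perm.one_apply]; omega), mul_one]

lemma demWord_cons (a : ℕ) (W : List ℕ) : demWord (a :: W) = lStep a (demWord W) := by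
  show List.foldl demStep (demStep 1 a) W = _
  rw [demStep_one, ← lStep_one a, foldl_lstep a W 1 FSupp.one]
  rfl

lemma demWord_append (A B : List ℕ) : demWord (A ++ B) = List.foldl demStep (demWord A) B :=
  List.foldl_append ..

lemma demWord_append_left (A W : List ℕ) : demWord (A ++ W) = A.foldr lStep (demWord W) := by
  induction A with
  | nil => rfl
  | cons a t ih => rw [List.cons_append, demWord_cons, ih]; rfl

lemma demWord_context (A W W' B : List ℕ) (h : demWord W = demWord W') :
    demWord (A ++ (W ++ B)) = demWord (A ++ (W' ++ B)) := by
  have h2 : demWord (W ++ B) = demWord (W' ++ B) := by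
    rw [demWord_append, demWord_append, h]
  rw [demWord_append_left A (W ++ B), demWord_append_left A (W' ++ B), h2]

lemma foldl_commute_single {i : ℕ} (Z : List ℕ) (hz : ∀ z ∈ Z, i + 2 ≤ z ∨ z + 2 ≤ i) :
    ∀ u : Equiv.Perm ℕ, FSupp u →
      List.foldl demStep (demStep u i) Z = demStep (List.foldl demStep u Z) i := by
  induction Z with
  | nil => intro u _; rfl
  | cons z t ih =>
    intro u hu
    simp only [List.foldl_cons]
    rw [demStep_comm hu (hz z (List.mem_cons_self)),
      ih (fun z' hz' => hz z' (List.mem_cons_of_mem _ hz')) _ (hu.dstep z)]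

lemma foldl_swap_blocks (Y Z : List ℕ) (h : ∀ y ∈ Y, ∀ z ∈ Z, y + 2 ≤ z ∨ z + 2 ≤ y) :
    ∀ u : Equiv.Perm ℕ, FSupp u →
      List.foldl demStep u (Y ++ Z) = List.foldl demStep u (Z ++ Y) := by
  induction Y with
  | nil => intro u _; simp
  | cons y t ih =>
    intro u hu
    rw [List.cons_append, List.foldl_cons,
      ih (fun a ha b hb => h a (List.mem_cons_of_mem _ ha) b hb) _ (hu.dstep y),
      List.foldl_append, List.foldl_append, List.foldl_cons,
      foldl_commute_single Z (fun z hz => h y (List.mem_cons_self) z hz) u hu]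

lemma interchange (ps : List (List ℕ × List ℕ))
    (h : ps.Pairwise (fun A B => ∀ x ∈ A.2, ∀ y ∈ B.1, x + 2 ≤ y ∨ y + 2 ≤ x)) :
    ∀ u : Equiv.Perm ℕ, FSupp u →
      List.foldl demStep u (ps.flatMap fun A => A.1 ++ A.2) =
        List.foldl demStep u ((ps.flatMap fun A => A.1) ++ ps.flatMap fun A => A.2) := by
  induction ps with
  | nil => intro u _; rfl
  | cons A t ih =>
    intro u hu
    rcases List.pairwise_cons.mp h with ⟨hA, ht⟩
    simp only [List.flatMap_cons]
    have hsw : List.foldl demStep (List.foldl demStep u A.1)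
        (A.2 ++ t.flatMap fun B => B.1) =
        List.foldl demStep (List.foldl demStep u A.1)
        ((t.flatMap fun B => B.1) ++ A.2) := by
      apply foldl_swap_blocks
      · intro x hx y hy
        rcases List.mem_flatMap.mp hy with ⟨B, hB, hyB⟩
        exact hA B hB x hx y hyB
      · exact hu.foldl _
    calc List.foldl demStep u ((A.1 ++ A.2) ++ t.flatMap fun B => B.1 ++ B.2)
        = List.foldl demStep (List.foldl demStep u (A.1 ++ A.2))
            (t.flatMap fun B => B.1 ++ B.2) := List.foldl_append ..
      _ = List.foldl demStep (List.foldl demStep u (A.1 ++ A.2))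
            ((t.flatMap fun B => B.1) ++ t.flatMap fun B => B.2) :=
          ih ht _ (hu.foldl _)
      _ = List.foldl demStep (List.foldl demStep (List.foldl demStep u A.1)
            (A.2 ++ t.flatMap fun B => B.1)) (t.flatMap fun B => B.2) := by
          simp [List.foldl_append]
      _ = List.foldl demStep (List.foldl demStep (List.foldl demStep u A.1)
            ((t.flatMap fun B => B.1) ++ A.2)) (t.flatMap fun B => B.2) := by rw [hsw]
      _ = List.foldl demStep u ((A.1 ++ t.flatMap fun B => B.1) ++
            (A.2 ++ t.flatMap fun B => B.2)) := by
          simp [List.foldl_append]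

lemma demStep_inv {v : Equiv.Perm ℕ} (hv : FSupp v) (a : ℕ) :
    demStep v⁻¹ a = (lStep a v)⁻¹ := by
  rw [demStep_eq hv.inv a]
  simp only [lStep]
  rw [apply_ite (fun w : Equiv.Perm ℕ => w⁻¹), mul_inv_rev, sGen_inv]

lemma demWord_reverse (W : List ℕ) : demWord W.reverse = (demWord W)⁻¹ := by
  induction W with
  | nil => simp [demWord_nil]
  | cons a t ih =>
    rw [List.reverse_cons, demWord_append, demWord_cons]
    show demStep (demWord t.reverse) a = _
    rw [ih, demStep_inv (demWord_fs t) a]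

/-! w0 conjugation -/

lemma w0_apply (m x : ℕ) : w0 m x = if x < m then m - 1 - x else x := rfl

lemma w0_invol (m : ℕ) : w0 m * w0 m = 1 := by
  ext x
  simp only [Equiv.Perm.mul_apply, w0_apply, Equiv.Perm.one_apply]
  split_ifs <;> omega

def SuppLt (m : ℕ) (w : Equiv.Perm ℕ) : Prop := ∀ x, m ≤ x → w x = x

lemma SuppLt.fs {m w} (h : SuppLt m w) : FSupp w := ⟨m, h⟩

lemma SuppLt.one (m : ℕ) : SuppLt m 1 := fun _ _ => rfl

lemma SuppLt.lt {m : ℕ} {w : Equiv.Perm ℕ} (h : SuppLt m w) {x : ℕ} (hx : x < m) : w x < m :=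
  apply_lt_of_bound h hx

lemma SuppLt.dstep {m : ℕ} {u : Equiv.Perm ℕ} (hu : SuppLt m u) {a : ℕ} (ha : a + 1 < m) :
    SuppLt m (demStep u a) := by
  rw [demStep_eq hu.fs a]
  split_ifs
  · intro x hx
    rw [Equiv.Perm.mul_apply, sGen_apply]
    rw [if_neg (by omega), if_neg (by omega)]
    exact hu x hx
  · exact hu

lemma suppLt_w0 (m : ℕ) : SuppLt m (w0 m) := fun x hx => by
  rw [w0_apply, if_neg (by omega)]

lemma w0_conj_sGen {m a : ℕ} (ha : a + 1 < m) : w0 m * sGen a * w0 m = sGen (m - 2 - a) := by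
  ext x
  simp only [Equiv.Perm.mul_apply, w0_apply, sGen_apply]
  split_ifs <;> omega

lemma w0_mul_sGen {m a : ℕ} (ha : a + 1 < m) :
    w0 m * sGen (m - 2 - a) = sGen a * w0 m := by
  have h1 := w0_conj_sGen (show (m - 2 - a) + 1 < m by omega)
  have h2 : m - 2 - (m - 2 - a) = a := by omega
  rw [h2] at h1
  calc w0 m * sGen (m - 2 - a) = w0 m * sGen (m - 2 - a) * (w0 m * w0 m) := by
        rw [w0_invol, mul_one]
    _ = (w0 m * sGen (m - 2 - a) * w0 m) * w0 m := by rw [mul_assoc, mul_assoc, mul_assoc]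
    _ = sGen a * w0 m := by rw [h1]

lemma conj_step {c m : ℕ} (hm : m = c + 2) {u : Equiv.Perm ℕ} (hu : SuppLt m u) {a : ℕ}
    (ha : a ≤ c) :
    demStep (w0 m * u * w0 m) (c - a) = w0 m * demStep u a * w0 m := by
  subst hm
  have hfs : FSupp (w0 (c + 2) * u * w0 (c + 2)) :=
    ((suppLt_w0 _).fs.mul hu.fs).mul (suppLt_w0 _).fs
  have hua1 : u (a + 1) < c + 2 := hu.lt (by omega)
  have hua : u a < c + 2 := hu.lt (by omega)
  have e1 : (w0 (c + 2) * u * w0 (c + 2)) (c - a) = c + 1 - u (a + 1) := by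
    have i1 : (w0 (c + 2)) (c - a) = a + 1 := by rw [w0_apply, if_pos (by omega)]; omega
    simp only [Equiv.Perm.mul_apply]
    rw [i1, w0_apply, if_pos hua1]
    omega
  have e2 : (w0 (c + 2) * u * w0 (c + 2)) (c - a + 1) = c + 1 - u a := by
    have i1 : (w0 (c + 2)) (c - a + 1) = a := by rw [w0_apply, if_pos (by omega)]; omega
    simp only [Equiv.Perm.mul_apply]
    rw [i1, w0_apply, if_pos hua]
    omega
  rw [demStep_eq hfs, demStep_eq hu.fs, e1, e2]
  have hkey : w0 (c + 2) * sGen (c - a) = sGen a * w0 (c + 2) := by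
    have := w0_mul_sGen (m := c + 2) (a := a) (by omega)
    rw [show c + 2 - 2 - a = c - a by omega] at this
    exact this
  by_cases hc : u a < u (a + 1)
  · rw [if_pos (by omega), if_pos hc]
    rw [mul_assoc (w0 (c + 2) * u), hkey, ← mul_assoc, ← mul_assoc, mul_assoc (w0 (c + 2)) u]
  · rw [if_neg (by omega), if_neg hc]

lemma conj_foldl {c m : ℕ} (hm : m = c + 2) (W : List ℕ) (hW : ∀ a ∈ W, a ≤ c) :
    ∀ u : Equiv.Perm ℕ, SuppLt m u →
      List.foldl demStep (w0 m * u * w0 m) (W.map fun a => c - a) =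
        w0 m * List.foldl demStep u W * w0 m := by
  induction W with
  | nil => intro u _; rfl
  | cons a t ih =>
    intro u hu
    simp only [List.map_cons, List.foldl_cons]
    have ha' : a ≤ c := hW a (List.mem_cons_self)
    rw [conj_step hm hu ha',
      ih (fun x hx => hW x (List.mem_cons_of_mem _ hx)) _ (hu.dstep (by omega))]

lemma demWord_map_sub {c : ℕ} (W : List ℕ) (hW : ∀ a ∈ W, a ≤ c) :
    demWord (W.map fun a => c - a) = w0 (c + 2) * demWord W * w0 (c + 2) := by
  have h1 : w0 (c + 2) * 1 * w0 (c + 2) = 1 := by rw [mul_one, w0_invol]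
  have := conj_foldl rfl W hW 1 (SuppLt.one _)
  rw [h1] at this
  exact this

/-! shift -/

lemma shiftPerm_apply_add (m : ℕ) (u : Equiv.Perm ℕ) (x : ℕ) :
    shiftPerm m u (m + x) = m + u x :=
  Equiv.Perm.viaEmbedding_apply u _ x

lemma shiftPerm_apply_lt (m : ℕ) (u : Equiv.Perm ℕ) {x : ℕ} (h : x < m) :
    shiftPerm m u x = x := by
  apply Equiv.Perm.viaEmbedding_apply_of_notMem
  rintro ⟨y, hy⟩
  simp only [Function.Embedding.coeFn_mk] at hy
  omega

lemma shiftPerm_one (m : ℕ) : shiftPerm m 1 = 1 := by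
  ext x
  by_cases h : x < m
  · rw [shiftPerm_apply_lt m 1 h]; rfl
  · have : x = m + (x - m) := by omega
    rw [this, shiftPerm_apply_add]; rfl

lemma shiftPerm_fs {m : ℕ} {u : Equiv.Perm ℕ} (hu : FSupp u) : FSupp (shiftPerm m u) := by
  obtain ⟨N, hN⟩ := hu
  refine ⟨m + N, fun x hx => ?_⟩
  have : x = m + (x - m) := by omega
  rw [this, shiftPerm_apply_add, hN _ (by omega)]

lemma sGen_shift (m a y : ℕ) : sGen (m + a) (m + y) = m + sGen a y := by
  rw [sGen_apply, sGen_apply]; split_ifs <;> omega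

lemma shiftPerm_mul_sGen (m a : ℕ) (u : Equiv.Perm ℕ) :
    shiftPerm m u * sGen (m + a) = shiftPerm m (u * sGen a) := by
  ext x
  rw [Equiv.Perm.mul_apply]
  by_cases h : x < m
  · rw [sGen_apply, if_neg (by omega), if_neg (by omega), shiftPerm_apply_lt m _ h,
      shiftPerm_apply_lt m _ h]
  · have hx : x = m + (x - m) := by omega
    rw [hx, sGen_shift, shiftPerm_apply_add, shiftPerm_apply_add, Equiv.Perm.mul_apply]

lemma shift_step {m : ℕ} {u : Equiv.Perm ℕ} (hu : FSupp u) (a : ℕ) :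
    demStep (shiftPerm m u) (m + a) = shiftPerm m (demStep u a) := by
  rw [demStep_eq (shiftPerm_fs hu), demStep_eq hu]
  have e1 : shiftPerm m u (m + a) = m + u a := shiftPerm_apply_add ..
  have e2 : shiftPerm m u (m + a + 1) = m + u (a + 1) := by
    rw [show m + a + 1 = m + (a + 1) by omega, shiftPerm_apply_add]
  by_cases hc : u a < u (a + 1)
  · rw [if_pos hc, if_pos (by rw [e1, e2]; omega), shiftPerm_mul_sGen]
  · rw [if_neg hc, if_neg (by rw [e1, e2]; omega)]

lemma shift_foldl (m : ℕ) (W : List ℕ) :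
    ∀ u : Equiv.Perm ℕ, FSupp u →
      List.foldl demStep (shiftPerm m u) (W.map fun a => m + a) =
        shiftPerm m (List.foldl demStep u W) := by
  induction W with
  | nil => intro u _; rfl
  | cons a t ih =>
    intro u hu
    simp only [List.map_cons, List.foldl_cons]
    rw [shift_step hu a, ih _ (hu.dstep a)]

lemma demWord_map_add (m : ℕ) (W : List ℕ) :
    demWord (W.map fun a => m + a) = shiftPerm m (demWord W) := by
  have := shift_foldl m W 1 FSupp.one
  rw [shiftPerm_one] at this
  exact this


/-! ### chunk 3 : list helpers -/

lemma filterMap_congr' {α β : Type*} {f g : α → Option β} :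
    ∀ {l : List α}, (∀ a ∈ l, f a = g a) → l.filterMap f = l.filterMap g := by
  intro l
  induction l with
  | nil => intro _; rfl
  | cons a t ih =>
    intro h
    rw [List.filterMap_cons, List.filterMap_cons, h a (List.mem_cons_self),
      ih fun x hx => h x (List.mem_cons_of_mem _ hx)]

lemma filterMap_eq_map' {α β : Type*} {f : α → Option β} {g : α → β} :
    ∀ {l : List α}, (∀ a ∈ l, f a = some (g a)) → l.filterMap f = l.map g := by
  intro l
  induction l with
  | nil => intro _; rfl
  | cons a t ih =>
    intro h
    rw [List.filterMap_cons, h a (List.mem_cons_self), List.map_cons,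
      ih fun x hx => h x (List.mem_cons_of_mem _ hx)]

lemma flatMap_congr' {α β : Type*} {f g : α → List β} :
    ∀ {l : List α}, (∀ a ∈ l, f a = g a) → l.flatMap f = l.flatMap g := by
  intro l
  induction l with
  | nil => intro _; rfl
  | cons a t ih =>
    intro h
    rw [List.flatMap_cons, List.flatMap_cons, h a (List.mem_cons_self),
      ih fun x hx => h x (List.mem_cons_of_mem _ hx)]

lemma reverse_range (k : ℕ) : (List.range k).reverse = (List.range k).map fun i => k - 1 - i := by
  apply List.ext_getElem
  · simp
  · intro t h1 h2
    simp only [List.getElem_reverse, List.getElem_range, List.getElem_map, List.length_range]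

/-! rowSum facts -/

lemma rowSum_succ (r : ℕ → ℕ) (j : ℕ) : rowSum r (j + 1) = rowSum r j + r j :=
  Finset.sum_range_succ r j

lemma rowSum_mono (r : ℕ → ℕ) {j j' : ℕ} (h : j ≤ j') : rowSum r j ≤ rowSum r j' :=
  Finset.sum_le_sum_of_subset (Finset.range_subset_range.mpr h)

lemma blockrow_exists (r : ℕ → ℕ) : ∀ (m x : ℕ), x < rowSum r m →
    ∃ j < m, rowSum r j ≤ x ∧ x < rowSum r (j + 1) := by
  intro m
  induction m with
  | zero => intro x hx; simp [rowSum] at hx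
  | succ m ih =>
    intro x hx
    by_cases h : x < rowSum r m
    · obtain ⟨j, hj, h1, h2⟩ := ih x h
      exact ⟨j, by omega, h1, h2⟩
    · exact ⟨m, by omega, by omega, hx⟩

lemma blockrow_unique (r : ℕ → ℕ) {j j' p : ℕ} (h1 : rowSum r j ≤ p) (h2 : p < rowSum r (j + 1))
    (h3 : rowSum r j' ≤ p) (h4 : p < rowSum r (j' + 1)) : j = j' := by
  rcases lt_trichotomy j j' with h | h | h
  · have := rowSum_mono r (show j + 1 ≤ j' by omega)
    omega
  · exact h
  · have := rowSum_mono r (show j' + 1 ≤ j by omega)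
    omega

lemma col_exists (n : ℕ) (r : ℕ → ℕ) {q : ℕ} (hq : q < dTot n r) :
    ∃ i ≤ n, InBlockCol n r i q := by
  have hd : dTot n r = rowSum r (n + 1) := rfl
  obtain ⟨i, hi, h1, h2⟩ := blockrow_exists r (n + 1) (dTot n r - 1 - q) (by omega)
  exact ⟨i, by omega, by constructor <;> omega⟩

/-! the key membership characterization -/

lemma mem_assemble_iff (n : ℕ) (r : ℕ → ℕ) (P : ℕ → PD) {j a q : ℕ}
    (hj : j ≤ n) (ha : a < r j) (hq : q < dTot n r) :
    ((rowSum r j + a, q) ∈ assemble n r P) ↔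
      (j < n ∧ q < dTot n r - rowSum r (j + 2)) ∨
      (j < n ∧ ∃ b < r (j + 1), q = (dTot n r - rowSum r (j + 2)) + b ∧ (a, b) ∈ P (j + 1)) := by
  have hd : dTot n r = rowSum r (n + 1) := rfl
  have hp : rowSum r j + a < dTot n r := by
    have h1 := rowSum_succ r j
    have h2 := rowSum_mono r (show j + 1 ≤ n + 1 by omega)
    omega
  have hbr : InBlockRow r j (rowSum r j + a) := by
    constructor
    · omega
    · rw [rowSum_succ]; omega
  have hS2 : rowSum r (j + 2) = rowSum r (j + 1) + r (j + 1) := rowSum_succ r (j + 1)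
  have hS1 : rowSum r (j + 1) = rowSum r j + r j := rowSum_succ r j
  have e6 : rowSum r (j + 1 + 1) = rowSum r (j + 2) := rfl
  constructor
  · intro hmem
    rw [assemble, Finset.mem_filter] at hmem
    rcases hmem.2 with ⟨j', hj', i, hi, hbr', hbc, hji⟩ | ⟨j₁, hj₁1, hj₁n, hbr', hbc, hPmem⟩
    · have hjj : j' = j := blockrow_unique r hbr'.1 hbr'.2 hbr.1 hbr.2
      rw [hjj] at hji
      left
      have hmono2 : rowSum r (j + 2) ≤ rowSum r i := rowSum_mono r (by omega)
      have := hbc.2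
      constructor
      · omega
      · omega
    · have hjj : j₁ - 1 = j := blockrow_unique r hbr'.1 hbr'.2 hbr.1 hbr.2
      have hj1 : j₁ = j + 1 := by omega
      subst hj1
      have hjn : j < n := by omega
      right
      refine ⟨hjn, q - (dTot n r - rowSum r (j + 2)), ?_, ?_, ?_⟩
      · have := hbc.1
        have := hbc.2
        have hle : rowSum r (j + 2) ≤ dTot n r := by
          rw [hd]; exact rowSum_mono r (by omega)
        omega
      · have := hbc.1
        omega
      · have e1 : rowSum r (j + 1 - 1) = rowSum r j := by norm_num
        have e2 : (rowSum r j + a) - rowSum r (j + 1 - 1) = a := by rw [e1]; omega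
        have e3 : (j + 1) + 1 = j + 2 := rfl
        rw [e2, e3] at hPmem
        exact hPmem
  · intro hmem
    rw [assemble, Finset.mem_filter]
    refine ⟨by rw [Finset.mem_product]; exact ⟨Finset.mem_range.mpr hp, Finset.mem_range.mpr hq⟩, ?_⟩
    rcases hmem with ⟨hjn, hqC⟩ | ⟨hjn, b, hb, hqb, hPmem⟩
    · left
      obtain ⟨i, hi, hbc⟩ := col_exists n r hq
      refine ⟨j, hj, i, hi, hbr, hbc, ?_⟩
      by_contra hcon
      have : rowSum r (i + 1) ≤ rowSum r (j + 2) := rowSum_mono r (by omega)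
      have := hbc.1
      omega
    · right
      have e7 : (j + 1 : ℕ) - 1 = j := rfl
      have hle : rowSum r (j + 2) ≤ dTot n r := by
        rw [hd]; exact rowSum_mono r (by omega)
      refine ⟨j + 1, by omega, by omega, ?_, ⟨?_, ?_⟩, ?_⟩
      · rw [e7]; exact hbr
      · show dTot n r - rowSum r (j + 1 + 1) ≤ q
        omega
      · show q < dTot n r - rowSum r (j + 1)
        omega
      · rw [e7]
        show (rowSum r j + a - rowSum r j, q - (dTot n r - rowSum r (j + 1 + 1))) ∈ P (j + 1)
        have e4 : rowSum r j + a - rowSum r j = a := by omega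
        have e5 : q - (dTot n r - rowSum r (j + 1 + 1)) = b := by omega
        rw [e4, e5]
        exact hPmem

lemma pdWord_eq_rows (k l : ℕ) (P : PD) :
    pdWord k l P = (List.range k).flatMap fun i =>
      ((List.range l).reverse).filterMap fun j => if (i, j) ∈ P then some (i + j) else none := by
  unfold pdWord posList
  rw [List.map_flatMap]
  apply flatMap_congr'
  intro i _
  rw [List.map_filterMap]
  apply filterMap_congr'
  intro j _
  split_ifs <;> rfl


/-! per-row decomposition -/

lemma rowWord_eq (n : ℕ) (r : ℕ → ℕ) (P : ℕ → PD) {j a : ℕ} (hj : j < n) (ha : a < r j) :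
    (((List.range (dTot n r)).reverse).filterMap fun q =>
        if (rowSum r j + a, q) ∈ assemble n r P then some ((rowSum r j + a) + q) else none) =
      ((((List.range (r (j + 1))).reverse).filterMap fun b =>
        if (a, b) ∈ P (j + 1) then
          some ((rowSum r j + (dTot n r - rowSum r (j + 2))) + (a + b)) else none) ++
      (((List.range (dTot n r - rowSum r (j + 2))).reverse).map fun q => (rowSum r j + a) + q)) := by
  have hS2 : rowSum r (j + 2) = rowSum r (j + 1) + r (j + 1) := rowSum_succ r (j + 1)
  have hS1 : rowSum r (j + 1) = rowSum r j + r j := rowSum_succ r j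
  have hle : rowSum r (j + 2) ≤ dTot n r := rowSum_mono r (by omega)
  have hle1 : rowSum r (j + 1) ≤ dTot n r := rowSum_mono r (by omega)
  have hsplit : List.range (dTot n r) =
      (List.range (dTot n r - rowSum r (j + 2)) ++
        List.map (fun x => (dTot n r - rowSum r (j + 2)) + x) (List.range (r (j + 1)))) ++
      List.map (fun x => ((dTot n r - rowSum r (j + 2)) + r (j + 1)) + x)
        (List.range (rowSum r (j + 1))) := by
    rw [← List.range_add, ← List.range_add]
    congr 1
    omega
  rw [hsplit, List.reverse_append, List.reverse_append, List.filterMap_append,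
    List.filterMap_append]
  have hseg3 : ((List.map (fun x => ((dTot n r - rowSum r (j + 2)) + r (j + 1)) + x)
      (List.range (rowSum r (j + 1)))).reverse).filterMap
      (fun q => if (rowSum r j + a, q) ∈ assemble n r P
        then some ((rowSum r j + a) + q) else none) = [] := by
    rw [← List.map_reverse, List.filterMap_map, List.filterMap_eq_nil_iff]
    intro x hx
    rw [List.mem_reverse, List.mem_range] at hx
    simp only [Function.comp_apply]
    rw [if_neg]
    rw [mem_assemble_iff n r P (le_of_lt hj) ha (by omega)]
    rintro (⟨_, h2⟩ | ⟨_, b, hb, heq, _⟩) <;> omega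
  have hseg2 : ((List.map (fun x => (dTot n r - rowSum r (j + 2)) + x)
      (List.range (r (j + 1)))).reverse).filterMap
      (fun q => if (rowSum r j + a, q) ∈ assemble n r P
        then some ((rowSum r j + a) + q) else none) =
      ((List.range (r (j + 1))).reverse).filterMap fun b =>
        if (a, b) ∈ P (j + 1) then
          some ((rowSum r j + (dTot n r - rowSum r (j + 2))) + (a + b)) else none := by
    rw [← List.map_reverse, List.filterMap_map]
    apply filterMap_congr'
    intro b hb
    rw [List.mem_reverse, List.mem_range] at hb
    simp only [Function.comp_apply]
    have hq : (dTot n r - rowSum r (j + 2)) + b < dTot n r := by omega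
    have hiff : ((rowSum r j + a, (dTot n r - rowSum r (j + 2)) + b) ∈ assemble n r P) ↔
        (a, b) ∈ P (j + 1) := by
      rw [mem_assemble_iff n r P (le_of_lt hj) ha hq]
      constructor
      · rintro (⟨_, h2⟩ | ⟨_, b', hb', heq, hm⟩)
        · omega
        · have hbb : b' = b := by omega
          rwa [hbb] at hm
      · intro hm
        exact Or.inr ⟨hj, b, hb, rfl, hm⟩
    have hval : (rowSum r j + a) + ((dTot n r - rowSum r (j + 2)) + b) =
        (rowSum r j + (dTot n r - rowSum r (j + 2))) + (a + b) := by omega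
    rw [if_congr hiff (congrArg some hval) rfl]
  have hseg1 : ((List.range (dTot n r - rowSum r (j + 2))).reverse).filterMap
      (fun q => if (rowSum r j + a, q) ∈ assemble n r P
        then some ((rowSum r j + a) + q) else none) =
      ((List.range (dTot n r - rowSum r (j + 2))).reverse).map fun q =>
        (rowSum r j + a) + q := by
    apply filterMap_eq_map'
    intro q hq
    rw [List.mem_reverse, List.mem_range] at hq
    rw [if_pos]
    rw [mem_assemble_iff n r P (le_of_lt hj) ha (by omega)]
    exact Or.inl ⟨hj, hq⟩
  rw [hseg3, hseg2, hseg1, List.nil_append]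

lemma rowWord_n (n : ℕ) (r : ℕ → ℕ) (P : ℕ → PD) {a : ℕ} (ha : a < r n) :
    (((List.range (dTot n r)).reverse).filterMap fun q =>
      if (rowSum r n + a, q) ∈ assemble n r P then some ((rowSum r n + a) + q) else none) = [] := by
  rw [List.filterMap_eq_nil_iff]
  intro q hq
  rw [List.mem_reverse, List.mem_range] at hq
  rw [if_neg]
  rw [mem_assemble_iff n r P (le_refl n) ha hq]
  rintro (⟨h, _⟩ | ⟨h, _⟩) <;> omega

lemma range_rowSum (r : ℕ → ℕ) (m : ℕ) :
    List.range (rowSum r m) = (List.range m).flatMap fun j =>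
      (List.range (r j)).map fun a => rowSum r j + a := by
  induction m with
  | zero => rfl
  | succ m ih =>
    rw [List.range_succ, List.flatMap_append, List.flatMap_singleton, ← ih,
      rowSum_succ, List.range_add]

lemma assembled_word (n : ℕ) (r : ℕ → ℕ) (P : ℕ → PD) :
    pdWord (dTot n r) (dTot n r) (assemble n r P) =
      (List.range n).flatMap fun j => (List.range (r j)).flatMap fun a =>
        ((((List.range (r (j + 1))).reverse).filterMap fun b =>
          if (a, b) ∈ P (j + 1) then
            some ((rowSum r j + (dTot n r - rowSum r (j + 2))) + (a + b)) else none) ++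
        (((List.range (dTot n r - rowSum r (j + 2))).reverse).map fun q =>
          (rowSum r j + a) + q)) := by
  have hrange : List.range (dTot n r) = (List.range (n + 1)).flatMap fun j =>
      (List.range (r j)).map fun a => rowSum r j + a := range_rowSum r (n + 1)
  have step1 : pdWord (dTot n r) (dTot n r) (assemble n r P) =
      ((List.range (n + 1)).flatMap fun j =>
        (List.range (r j)).map fun a => rowSum r j + a).flatMap
        fun i => ((List.range (dTot n r)).reverse).filterMap fun q =>
          if (i, q) ∈ assemble n r P then some (i + q) else none :=
    (pdWord_eq_rows _ _ _).trans
      (congrArg (fun l : List ℕ => l.flatMap fun i =>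
        ((List.range (dTot n r)).reverse).filterMap fun q =>
          if (i, q) ∈ assemble n r P then some (i + q) else none) hrange)
  rw [step1, List.flatMap_assoc]
  simp only [List.flatMap_map]
  rw [List.range_succ, List.flatMap_append, List.flatMap_singleton]
  have hlast : (List.range (r n)).flatMap (fun a =>
      ((List.range (dTot n r)).reverse).filterMap fun q =>
        if (rowSum r n + a, q) ∈ assemble n r P
        then some ((rowSum r n + a) + q) else none) = [] := by
    rw [List.flatMap_eq_nil_iff]
    intro a ha
    exact rowWord_n n r P (List.mem_range.mp ha)
  rw [hlast, List.append_nil]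
  apply flatMap_congr'
  intro j hj
  apply flatMap_congr'
  intro a ha
  exact rowWord_eq n r P (List.mem_range.mp hj) (List.mem_range.mp ha)

/-! foldl congruence machinery -/

lemma foldl_flatMap_congr (idx : List ℕ) (g g' : ℕ → List ℕ)
    (h : ∀ j ∈ idx, ∀ u : Equiv.Perm ℕ, FSupp u →
      List.foldl demStep u (g j) = List.foldl demStep u (g' j)) :
    ∀ u, FSupp u →
      List.foldl demStep u (idx.flatMap g) = List.foldl demStep u (idx.flatMap g') := by
  induction idx with
  | nil => intro u _; rfl
  | cons j t ih =>
    intro u hu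
    rw [List.flatMap_cons, List.flatMap_cons, List.foldl_append, List.foldl_append,
      h j (List.mem_cons_self) u hu,
      ih (fun x hx => h x (List.mem_cons_of_mem _ hx)) _ (hu.foldl _)]

lemma block_fold (n : ℕ) (r : ℕ → ℕ) (P : ℕ → PD) {j : ℕ} :
    ∀ u : Equiv.Perm ℕ, FSupp u →
      List.foldl demStep u ((List.range (r j)).flatMap fun a =>
        ((((List.range (r (j + 1))).reverse).filterMap fun b =>
          if (a, b) ∈ P (j + 1) then
            some ((rowSum r j + (dTot n r - rowSum r (j + 2))) + (a + b)) else none) ++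
        (((List.range (dTot n r - rowSum r (j + 2))).reverse).map fun q =>
          (rowSum r j + a) + q))) =
      List.foldl demStep u
        (((pdWord (r j) (r (j + 1)) (P (j + 1))).map fun x =>
            (rowSum r j + (dTot n r - rowSum r (j + 2))) + x) ++
        ((List.range (r j)).flatMap fun a =>
          ((List.range (dTot n r - rowSum r (j + 2))).reverse).map fun q =>
            (rowSum r j + a) + q)) := by
  intro u hu
  set Xr := fun a => (((List.range (r (j + 1))).reverse).filterMap fun b =>
    if (a, b) ∈ P (j + 1) then
      some ((rowSum r j + (dTot n r - rowSum r (j + 2))) + (a + b)) else none) with hXr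
  set Fr := fun a => (((List.range (dTot n r - rowSum r (j + 2))).reverse).map fun q =>
    (rowSum r j + a) + q) with hFr
  have hps : ((List.range (r j)).flatMap fun a => Xr a ++ Fr a) =
      (((List.range (r j)).map fun a => (Xr a, Fr a)).flatMap fun A => A.1 ++ A.2) := by
    rw [List.flatMap_map]
  have hpair : (((List.range (r j)).map fun a => (Xr a, Fr a)).Pairwise
      fun A B => ∀ x ∈ A.2, ∀ y ∈ B.1, x + 2 ≤ y ∨ y + 2 ≤ x) := by
    rw [List.pairwise_map]
    refine List.Pairwise.imp ?_ ((List.pairwise_lt_range (n := r j)))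
    intro a a' haa x hx y hy
    simp only [hFr, List.mem_map, List.mem_reverse, List.mem_range] at hx
    obtain ⟨q, hq, rfl⟩ := hx
    simp only [hXr, List.mem_filterMap, List.mem_reverse, List.mem_range] at hy
    obtain ⟨b, hb, hby⟩ := hy
    split_ifs at hby with hc
    have hyv := Option.some.inj hby
    left
    omega
  have h1 : (((List.range (r j)).map fun a => (Xr a, Fr a)).flatMap fun A => A.1) =
      (List.range (r j)).flatMap Xr := by rw [List.flatMap_map]
  have h2 : (((List.range (r j)).map fun a => (Xr a, Fr a)).flatMap fun A => A.2) =
      (List.range (r j)).flatMap Fr := by rw [List.flatMap_map]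
  have hX : (List.range (r j)).flatMap Xr =
      (pdWord (r j) (r (j + 1)) (P (j + 1))).map fun x =>
        (rowSum r j + (dTot n r - rowSum r (j + 2))) + x := by
    rw [pdWord_eq_rows, List.map_flatMap]
    apply flatMap_congr'
    intro a _
    rw [hXr, List.map_filterMap]
    apply filterMap_congr'
    intro b _
    split_ifs <;> rfl
  rw [hps, interchange _ hpair u hu, h1, h2, hX]

lemma main_key (n : ℕ) (r : ℕ → ℕ) (P : ℕ → PD) :
    pdDelta (dTot n r) (dTot n r) (assemble n r P) =
      demWord ((List.range n).flatMap fun j =>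
        ((pdWord (r j) (r (j + 1)) (P (j + 1))).map fun x =>
            (rowSum r j + (dTot n r - rowSum r (j + 2))) + x) ++
        ((List.range (r j)).flatMap fun a =>
          ((List.range (dTot n r - rowSum r (j + 2))).reverse).map fun q =>
            (rowSum r j + a) + q)) := by
  show demWord _ = _
  rw [assembled_word]
  show List.foldl demStep 1 _ = List.foldl demStep 1 _
  exact foldl_flatMap_congr (List.range n) _ _
    (fun j _ u hu => block_fold n r P u hu) 1 FSupp.one

lemma demWord_replace (g g' F : ℕ → List ℕ) :
    ∀ (idx : List ℕ) (A : List ℕ), (∀ j ∈ idx, demWord (g j) = demWord (g' j)) →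
      demWord (A ++ idx.flatMap fun j => g j ++ F j) =
        demWord (A ++ idx.flatMap fun j => g' j ++ F j) := by
  intro idx
  induction idx with
  | nil => intro A _; rfl
  | cons j t ih =>
    intro A h
    simp only [List.flatMap_cons]
    calc demWord (A ++ ((g j ++ F j) ++ t.flatMap fun x => g x ++ F x))
        = demWord (A ++ (g j ++ (F j ++ t.flatMap fun x => g x ++ F x))) := by
          rw [List.append_assoc]
      _ = demWord (A ++ (g' j ++ (F j ++ t.flatMap fun x => g x ++ F x))) :=
          demWord_context _ _ _ _ (h j (List.mem_cons_self))
      _ = demWord ((A ++ g' j ++ F j) ++ t.flatMap fun x => g x ++ F x) := by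
          simp only [List.append_assoc]
      _ = demWord ((A ++ g' j ++ F j) ++ t.flatMap fun x => g' x ++ F x) := by
          have := ih (A ++ g' j ++ F j) (fun x hx => h x (List.mem_cons_of_mem _ hx))
          -- this : demWord ((A ++ g' j ++ F j) ++ t.flatMap (fun j => g j ++ F j)) = ...
          exact this
      _ = demWord (A ++ ((g' j ++ F j) ++ t.flatMap fun x => g' x ++ F x)) := by
          simp only [List.append_assoc]

/-! rotation -/

lemma mem_of_mem_posList {k l : ℕ} {Q : PD} {pq : ℕ × ℕ} (h : pq ∈ posList k l Q) : pq ∈ Q := by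
  unfold posList at h
  rcases List.mem_flatMap.mp h with ⟨i, _, hi⟩
  rcases List.mem_filterMap.mp hi with ⟨j, _, hj⟩
  split_ifs at hj with hc
  exact (Option.some.inj hj) ▸ hc

lemma mem_rot180 {k l : ℕ} {Q : PD} (hQ : InGrid k l Q) {x y : ℕ} (hx : x < k) (hy : y < l) :
    (x, y) ∈ rot180 k l Q ↔ (k - 1 - x, l - 1 - y) ∈ Q := by
  unfold rot180
  rw [Finset.mem_image]
  constructor
  · rintro ⟨⟨a, b⟩, hab, heq⟩
    obtain ⟨hg1, hg2⟩ := hQ _ hab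
    simp only [Prod.mk.injEq] at heq
    have h1 : k - 1 - x = a := by omega
    have h2 : l - 1 - y = b := by omega
    rw [h1, h2]
    exact hab
  · intro h
    refine ⟨(k - 1 - x, l - 1 - y), h, ?_⟩
    simp only [Prod.mk.injEq]
    constructor <;> omega

lemma rev_fm_helper {α : Type*} (l : ℕ) (h : ℕ → Option α) (f : α → α) :
    (List.map f (List.filterMap h ((List.range l).reverse))).reverse =
      List.filterMap (fun q => Option.map f (h q)) (List.range l) := by
  rw [List.map_filterMap, List.filterMap_reverse, List.reverse_reverse]

lemma fm_rev_helper {α : Type*} (l : ℕ) (h : ℕ → Option α) :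
    List.filterMap h ((List.range l).reverse) =
      List.filterMap (fun q => h (l - 1 - q)) (List.range l) := by
  rw [reverse_range l, List.filterMap_map]
  rfl

lemma pdWord_rot (k l : ℕ) (Q : PD) (hQ : InGrid k l Q) :
    pdWord k l (rot180 k l Q) = ((pdWord k l Q).map fun x => (k + l - 2) - x).reverse := by
  rw [pdWord_eq_rows, pdWord_eq_rows, List.map_flatMap, List.reverse_flatMap, reverse_range k,
    List.flatMap_map]
  apply flatMap_congr'
  intro t ht
  rw [List.mem_range] at ht
  simp only [Function.comp_apply]
  rw [rev_fm_helper, fm_rev_helper]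
  apply filterMap_congr'
  intro q hq
  rw [List.mem_range] at hq
  have hmem := mem_rot180 hQ ht (show l - 1 - q < l by omega)
  rw [show l - 1 - (l - 1 - q) = q by omega] at hmem
  rw [apply_ite (Option.map fun x => (k + l - 2) - x), Option.map_some, Option.map_none]
  have hval : t + (l - 1 - q) = (k + l - 2) - ((k - 1 - t) + q) := by omega
  exact if_congr hmem (congrArg some hval) rfl

lemma pdWord_le {k l : ℕ} {Q : PD} (hQ : InGrid k l Q) : ∀ x ∈ pdWord k l Q, x ≤ k + l - 2 := by
  intro x hx
  rw [pdWord] at hx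
  rcases List.mem_map.mp hx with ⟨pq, hpq, rfl⟩
  have := hQ pq (mem_of_mem_posList hpq)
  omega

lemma delta_det {k l : ℕ} {Q Q' : PD} (hQ : InGrid k l Q) (hQ' : InGrid k l Q')
    (h : pdDelta k l (rot180 k l Q) = pdDelta k l (rot180 k l Q')) (m : ℕ) :
    demWord ((pdWord k l Q).map fun x => m + x) =
      demWord ((pdWord k l Q').map fun x => m + x) := by
  have key : demWord (pdWord k l Q) = demWord (pdWord k l Q') := by
    have h1 := h
    rw [pdDelta, pdDelta, pdWord_rot k l Q hQ, pdWord_rot k l Q' hQ',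
      demWord_reverse, demWord_reverse, inv_inj,
      demWord_map_sub _ (pdWord_le hQ), demWord_map_sub _ (pdWord_le hQ'),
      mul_assoc, mul_assoc] at h1
    exact mul_right_cancel (mul_left_cancel h1)
  rw [demWord_map_add, demWord_map_add, key]



/-- **Proposition (the Demazure product of a lacing diagram is well defined).**
Fix a lacing diagram `w = (w_1, …, w_n)`.  The Demazure product of `P(P_1, …, P_n)`
is the same permutation for every choice of pipe dreams `P_1, …, P_n` with
`P̌_j ∈ 𝒫(w_j)` for all `j = 1, …, n`. -/
theorem stmt5 (n : ℕ) (r : ℕ → ℕ) (L : ℕ → ℕ → ℕ → Prop)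
    (hL : IsLacingDiagram n r L)
    (P P' : ℕ → PD) (hP : LacingChoices n r L P) (hP' : LacingChoices n r L P') :
    pdDelta (dTot n r) (dTot n r) (assemble n r P) =
      pdDelta (dTot n r) (dTot n r) (assemble n r P') := by
  have key : ∀ j ∈ List.range n,
      demWord ((pdWord (r j) (r (j + 1)) (P (j + 1))).map fun x =>
        (rowSum r j + (dTot n r - rowSum r (j + 2))) + x) =
      demWord ((pdWord (r j) (r (j + 1)) (P' (j + 1))).map fun x =>
        (rowSum r j + (dTot n r - rowSum r (j + 2))) + x) := by
    intro j hj
    rw [List.mem_range] at hj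
    obtain ⟨hg, hpd⟩ := hP (j + 1) (by omega) (by omega)
    obtain ⟨hg', hpd'⟩ := hP' (j + 1) (by omega) (by omega)
    exact delta_det hg hg' (hpd.2.trans hpd'.2.symm) _
  rw [main_key n r P, main_key n r P']
  have hrep := demWord_replace
    (fun j => (pdWord (r j) (r (j + 1)) (P (j + 1))).map fun x =>
      (rowSum r j + (dTot n r - rowSum r (j + 2))) + x)
    (fun j => (pdWord (r j) (r (j + 1)) (P' (j + 1))).map fun x =>
      (rowSum r j + (dTot n r - rowSum r (j + 2))) + x)
    (fun j => (List.range (r j)).flatMap fun a =>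
      ((List.range (dTot n r - rowSum r (j + 2))).reverse).map fun q => (rowSum r j + a) + q)
    (List.range n) [] key
  simpa using hrep


end
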